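/- Let ξ > 0 and γ ∈ (1/2, 1), and let a, b : [2ξ, ∞) → [0, ∞) be continuously differentiable functions satisfying a′(t) ≤ (ξ/t²)·b(t) and b′(t) ≤ (ξ·t)^{−1/2}·a(t) for all t ≥ 2ξ. Then there exists a constant C_γ depending only on γ (in particular independent of ξ) such that for all t ≥ 2ξ: a(t)² + (t/ξ)^{−2γ}·b(t)² ≤ C_γ·( a(2ξ)² + b(2ξ)² ). -/

import Mathlib

open Real Set

noncomputable section

set_option maxHeartbeats 1600000 in
/-- long-time ODE comparison: for `γ ∈ (1/2, 1)` there is a constant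
`C_γ` depending only on `γ` such that for every `ξ > 0` and all nonnegative `C¹`
functions `a, b` on `[2ξ,∞)` with `a′ ≤ (ξ/t²) b` and `b′ ≤ (ξt)^{−1/2} a`, one has
`a(t)² + (t/ξ)^{−2γ} b(t)² ≤ C_γ (a(2ξ)² + b(2ξ)²)` for all `t ≥ 2ξ`. -/
theorem statement18 (γ : ℝ) (hγ0 : 1 / 2 < γ) (hγ1 : γ < 1) :
    ∃ C : ℝ, 0 < C ∧
      ∀ (ξ : ℝ), 0 < ξ →
      ∀ a b a' b' : ℝ → ℝ,
        (∀ t : ℝ, 2 * ξ ≤ t → 0 ≤ a t) →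
        (∀ t : ℝ, 2 * ξ ≤ t → 0 ≤ b t) →
        (∀ t : ℝ, 2 * ξ ≤ t → HasDerivWithinAt a (a' t) (Ici (2 * ξ)) t) →
        (∀ t : ℝ, 2 * ξ ≤ t → HasDerivWithinAt b (b' t) (Ici (2 * ξ)) t) →
        ContinuousOn a' (Ici (2 * ξ)) →
        ContinuousOn b' (Ici (2 * ξ)) →
        (∀ t : ℝ, 2 * ξ ≤ t → a' t ≤ (ξ / t ^ 2) * b t) →
        (∀ t : ℝ, 2 * ξ ≤ t → b' t ≤ (ξ * t) ^ (-(1 / 2) : ℝ) * a t) →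
        ∀ t : ℝ, 2 * ξ ≤ t →
          a t ^ 2 + (t / ξ) ^ (-(2 * γ)) * b t ^ 2 ≤
            C * (a (2 * ξ) ^ 2 + b (2 * ξ) ^ 2) := by
  have h1γ : (0:ℝ) < 1 - γ := by linarith
  have hγh : (0:ℝ) < γ - 1/2 := by linarith
  refine ⟨Real.exp (1/(1-γ) + 1/(γ-1/2)), Real.exp_pos _, ?_⟩
  intro ξ hξ a b a' b' ha0 hb0 hda hdb hca hcb hia hib t ht
  set x0 : ℝ := 2 * ξ with hx0def
  have hx0 : 0 < x0 := by positivity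
  -- basic positivity on the domain
  have hpos : ∀ u : ℝ, u ∈ Ici x0 → 0 < u := fun u hu => lt_of_lt_of_le hx0 hu
  have hmpos : ∀ u : ℝ, u ∈ Ici x0 → 0 < u / ξ := fun u hu => div_pos (hpos u hu) hξ
  -- the weight, the exponent function, and the Lyapunov function
  set E : ℝ → ℝ := fun u => a u ^ 2 + (u/ξ) ^ (-(2*γ) : ℝ) * b u ^ 2 with hEdef
  set G : ℝ → ℝ := fun u =>
    -((1/(1-γ)) * (u/ξ) ^ (γ-1 : ℝ)) - (1/(γ-1/2)) * (u/ξ) ^ (1/2-γ : ℝ) with hGdef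
  set F : ℝ → ℝ := fun u => E u * Real.exp (-(G u)) with hFdef
  set g : ℝ → ℝ := fun u => (1/ξ) * ((u/ξ) ^ (γ-2 : ℝ) + (u/ξ) ^ (-(1/2)-γ : ℝ)) with hgdef
  -- derivative of u ↦ (u/ξ)^p
  have hrp : ∀ (p : ℝ) (u : ℝ), u ∈ Ici x0 →
      HasDerivAt (fun v : ℝ => (v/ξ) ^ p) (p * (u/ξ) ^ (p-1) * (1/ξ)) u := by
    intro p u hu
    have h1 : HasDerivAt (fun v : ℝ => v/ξ) (1/ξ) u := by
      simpa [one_div] using (hasDerivAt_id u).div_const ξ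
    exact (Real.hasDerivAt_rpow_const (Or.inl (hmpos u hu).ne')).comp u h1
  -- G is nonpositive on the domain
  have hGle : ∀ u : ℝ, u ∈ Ici x0 → G u ≤ 0 := by
    intro u hu
    have h1 : 0 < (u/ξ) ^ (γ-1 : ℝ) := Real.rpow_pos_of_pos (hmpos u hu) _
    have h2 : 0 < (u/ξ) ^ (1/2-γ : ℝ) := Real.rpow_pos_of_pos (hmpos u hu) _
    have c1 : 0 < 1/(1-γ) := by positivity
    have c2 : 0 < 1/(γ-1/2) := by positivity
    simp only [hGdef]
    nlinarith [mul_pos c1 h1, mul_pos c2 h2]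
  -- continuity facts
  have hconta : ContinuousOn a (Ici x0) := fun u hu => (hda u hu).continuousWithinAt
  have hcontb : ContinuousOn b (Ici x0) := fun u hu => (hdb u hu).continuousWithinAt
  have hcontp : ∀ p : ℝ, ContinuousOn (fun u : ℝ => (u/ξ) ^ p) (Ici x0) := by
    intro p u hu
    have h1 : ContinuousAt (fun v : ℝ => v / ξ) u := continuousAt_id.div_const ξ
    exact (h1.rpow_const (Or.inl (hmpos u hu).ne')).continuousWithinAt
  have hcontE : ContinuousOn E (Ici x0) :=
    (hconta.pow 2).add ((hcontp _).mul (hcontb.pow 2))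
  have hcontG : ContinuousOn G (Ici x0) :=
    ((continuousOn_const.mul (hcontp _)).neg).sub (continuousOn_const.mul (hcontp _))
  have hcontF : ContinuousOn F (Ici x0) := hcontE.mul (hcontG.neg.rexp)
  -- the pointwise derivative of F on the interior, and its sign
  have hderiv : ∀ u : ℝ, u ∈ Ioi x0 →
      ∃ D : ℝ, HasDerivAt F D u ∧ D ≤ 0 := by
    intro u hu
    have hu' : u ∈ Ici x0 := mem_Ici.mpr (le_of_lt hu)
    have hupos : 0 < u := hpos u hu'
    have hm : 0 < u / ξ := hmpos u hu'
    have hmem : Ici x0 ∈ nhds u := Ici_mem_nhds hu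
    have ha' : HasDerivAt a (a' u) u := (hda u hu').hasDerivAt hmem
    have hb' : HasDerivAt b (b' u) u := (hdb u hu').hasDerivAt hmem
    have hsqa : HasDerivAt (fun v => a v ^ 2) (2 * a u * a' u) u := by
      simpa using ha'.fun_pow 2
    have hsqb : HasDerivAt (fun v => b v ^ 2) (2 * b u * b' u) u := by
      simpa using hb'.fun_pow 2
    have hw' : HasDerivAt (fun v : ℝ => (v/ξ) ^ (-(2*γ) : ℝ))
        ((-(2*γ)) * (u/ξ) ^ ((-(2*γ)) - 1 : ℝ) * (1/ξ)) u := hrp _ u hu'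
    have hE' : HasDerivAt E
        (2 * a u * a' u + (((-(2*γ)) * (u/ξ) ^ ((-(2*γ)) - 1 : ℝ) * (1/ξ)) * b u ^ 2
          + (u/ξ) ^ (-(2*γ) : ℝ) * (2 * b u * b' u))) u := hsqa.add (hw'.mul hsqb)
    have hG' : HasDerivAt G (g u) u := by
      have h1 := (hrp (γ-1) u hu').const_mul (1/(1-γ))
      have h2 := (hrp (1/2-γ) u hu').const_mul (1/(γ-1/2))
      have h3 := h1.fun_neg.fun_sub h2
      refine h3.congr_deriv ?_
      symm
      simp only [hgdef]
      rw [show (γ - 1 - 1 : ℝ) = γ - 2 from by ring,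
        show (1/2 - γ - 1 : ℝ) = -(1/2) - γ from by ring]
      have k1 : (1/(1-γ)) * (γ-1) = -1 := by
        rw [div_mul_eq_mul_div, div_eq_iff h1γ.ne']; ring
      have k2 : (1/(γ-1/2)) * (1/2-γ) = -1 := by
        rw [div_mul_eq_mul_div, div_eq_iff hγh.ne']; ring
      linear_combination ((u/ξ) ^ (γ-2 : ℝ) * (1/ξ)) * k1
        + ((u/ξ) ^ (-(1/2)-γ : ℝ) * (1/ξ)) * k2
    have hexp : HasDerivAt (fun v => Real.exp (-(G v))) (Real.exp (-(G u)) * (-(g u))) u :=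
      (hG'.neg).exp
    refine ⟨_, hE'.mul hexp, ?_⟩
    -- now show the derivative value is ≤ 0
    set A := a u with hA
    set B := b u with hB
    set lam := (u/ξ) ^ (γ : ℝ) with hlamdef
    set wv := (u/ξ) ^ (-(2*γ) : ℝ) with hwvdef
    have hlam : 0 < lam := Real.rpow_pos_of_pos hm _
    have hwv : 0 < wv := Real.rpow_pos_of_pos hm _
    have hA0 : 0 ≤ A := ha0 u hu'
    have hB0 : 0 ≤ B := hb0 u hu'
    have hP : 0 < Real.exp (-(G u)) := Real.exp_pos _
    -- key rpow identities
    have f3 : wv * lam ^ 2 = 1 := by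
      have : lam ^ 2 = (u/ξ) ^ (γ + γ : ℝ) := by
        rw [Real.rpow_add hm]; ring
      rw [this, hwvdef, ← Real.rpow_add hm,
        show (-(2*γ) + (γ + γ) : ℝ) = 0 from by ring, Real.rpow_zero]
    have hwv' : wv = 1 / lam ^ 2 := by
      rw [eq_div_iff (by positivity : (lam ^ 2 : ℝ) ≠ 0)]
      linarith [f3]
    have f1 : (1/ξ) * (u/ξ) ^ (γ-2 : ℝ) = (ξ / u^2) * lam := by
      rw [Real.rpow_sub hm, hlamdef]
      rw [show ((2:ℝ)) = ((2:ℕ):ℝ) by norm_num, Real.rpow_natCast]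
      have h2 : (u/ξ)^2 = u^2/ξ^2 := by ring
      rw [h2]
      field_simp
    have hsig : (1/ξ) * (u/ξ) ^ (-(1/2) : ℝ) = (ξ * u) ^ (-(1/2) : ℝ) := by
      have hY : 0 < ξ ^ (-(1/2) : ℝ) := Real.rpow_pos_of_pos hξ _
      have h4 : ξ ^ (-(1/2) : ℝ) * ξ ^ (-(1/2) : ℝ) = ξ⁻¹ := by
        rw [← Real.rpow_add hξ, show (-(1/2) + -(1/2) : ℝ) = -1 from by ring,
          Real.rpow_neg_one]
      rw [Real.mul_rpow hξ.le hupos.le, Real.div_rpow hupos.le hξ.le, one_div, ← h4]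
      field_simp
    have f2 : (1/ξ) * (u/ξ) ^ (-(1/2)-γ : ℝ) = wv * (ξ * u) ^ (-(1/2) : ℝ) * lam := by
      have e : (u/ξ) ^ (-(1/2)-γ : ℝ)
          = (u/ξ) ^ (-(2*γ) : ℝ) * (u/ξ) ^ (γ : ℝ) * (u/ξ) ^ (-(1/2) : ℝ) := by
        rw [← Real.rpow_add hm, ← Real.rpow_add hm]
        congr 1
        ring
      rw [e, hwvdef, hlamdef]
      linear_combination ((u/ξ) ^ (-(2*γ) : ℝ) * (u/ξ) ^ (γ : ℝ)) * hsig
    -- hypothesis bounds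
    have hc1 : (0:ℝ) ≤ ξ / u^2 := by positivity
    have hsg : (0:ℝ) ≤ (ξ * u) ^ (-(1/2) : ℝ) := by positivity
    have i1 : a' u ≤ (ξ / u^2) * B := hia u hu'
    have i2 : b' u ≤ (ξ * u) ^ (-(1/2) : ℝ) * A := hib u hu'
    have hwneg : ((-(2*γ)) * (u/ξ) ^ ((-(2*γ)) - 1 : ℝ) * (1/ξ)) * B ^ 2 ≤ 0 := by
      have h1 : 0 < (u/ξ) ^ ((-(2*γ)) - 1 : ℝ) := Real.rpow_pos_of_pos hm _
      have h2 : 0 ≤ (2*γ) * (u/ξ) ^ ((-(2*γ)) - 1 : ℝ) * (1/ξ) * B ^ 2 := by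
        have : (0:ℝ) ≤ 2*γ := by linarith
        positivity
      linarith [h2, show ((-(2*γ)) * (u/ξ) ^ ((-(2*γ)) - 1 : ℝ) * (1/ξ)) * B ^ 2
        = -((2*γ) * (u/ξ) ^ ((-(2*γ)) - 1 : ℝ) * (1/ξ) * B ^ 2) from by ring]
    -- the core algebraic inequality
    set c1 := ξ / u^2 with hc1def
    set sg := (ξ * u) ^ (-(1/2) : ℝ) with hsgdef
    have hgE : 2 * c1 * A * B + 2 * (wv * sg) * A * B ≤ g u * (A^2 + wv * B^2) := by
      have hgu : g u = (c1 + wv * sg) * lam := by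
        simp only [hgdef]
        rw [mul_add, f1, f2]
        ring
      have hexpand : (c1 + wv * sg) * lam * (A^2 + wv * B^2)
          - (2 * c1 * A * B + 2 * (wv * sg) * A * B)
          = (c1 + wv * sg) * ((lam * A - B)^2 / lam) := by
        rw [hwv']
        field_simp
        ring
      have hnn : 0 ≤ (c1 + wv * sg) * ((lam * A - B)^2 / lam) := by positivity
      rw [hgu]
      linarith [hexpand, hnn]
    -- assemble: derivative = (E' - g E) * exp(-(G u)), with E' - g E ≤ 0
    have hEc : 2 * A * a' u + (((-(2*γ)) * (u/ξ) ^ ((-(2*γ)) - 1 : ℝ) * (1/ξ)) * B ^ 2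
        + wv * (2 * B * b' u)) - g u * (A^2 + wv * B^2) ≤ 0 := by
      have m1 : A * a' u ≤ A * (c1 * B) := mul_le_mul_of_nonneg_left i1 hA0
      have j1 : 2 * A * a' u ≤ 2 * c1 * A * B := by linarith [m1]
      have m2 : B * b' u ≤ B * (sg * A) := mul_le_mul_of_nonneg_left i2 hB0
      have m2' : wv * (B * b' u) ≤ wv * (B * (sg * A)) :=
        mul_le_mul_of_nonneg_left m2 hwv.le
      have j2 : wv * (2 * B * b' u) ≤ 2 * (wv * sg) * A * B := by linarith [m2']
      linarith [hgE]
    calc (2 * A * a' u + (((-(2*γ)) * (u/ξ) ^ ((-(2*γ)) - 1 : ℝ) * (1/ξ)) * B ^ 2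
          + wv * (2 * B * b' u))) * Real.exp (-(G u))
          + E u * (Real.exp (-(G u)) * (-(g u)))
        = (2 * A * a' u + (((-(2*γ)) * (u/ξ) ^ ((-(2*γ)) - 1 : ℝ) * (1/ξ)) * B ^ 2
          + wv * (2 * B * b' u)) - g u * (A^2 + wv * B^2)) * Real.exp (-(G u)) := by
          simp only [hEdef, ← hA, ← hB, ← hwvdef]
          ring
      _ ≤ 0 := mul_nonpos_of_nonpos_of_nonneg hEc hP.le
  -- F is antitone on [x0, ∞)
  have hanti : AntitoneOn F (Ici x0) := by
    apply antitoneOn_of_deriv_nonpos (convex_Ici x0) hcontF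
    · intro u hu
      rw [interior_Ici] at hu
      obtain ⟨D, hD, _⟩ := hderiv u hu
      exact hD.differentiableAt.differentiableWithinAt
    · intro u hu
      rw [interior_Ici] at hu
      obtain ⟨D, hD, hDle⟩ := hderiv u hu
      rw [hD.deriv]
      exact hDle
  -- conclude
  have hFt : F t ≤ F x0 := hanti (self_mem_Ici) ht ht
  have hE0 : 0 ≤ E x0 := by
    have h := Real.rpow_pos_of_pos (hmpos x0 self_mem_Ici) (-(2*γ))
    simp only [hEdef]
    exact add_nonneg (sq_nonneg _) (mul_nonneg h.le (sq_nonneg _))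
  have hEt : 0 ≤ E t := by
    have h := Real.rpow_pos_of_pos (hmpos t ht) (-(2*γ))
    simp only [hEdef]
    exact add_nonneg (sq_nonneg _) (mul_nonneg h.le (sq_nonneg _))
  have step1 : E t ≤ F t := by
    have h1 : (1:ℝ) ≤ Real.exp (-(G t)) := by
      rw [Real.one_le_exp_iff]
      linarith [hGle t ht]
    calc E t = E t * 1 := by ring
      _ ≤ E t * Real.exp (-(G t)) := by
          exact mul_le_mul_of_nonneg_left h1 hEt
  have hx0m : x0 / ξ = 2 := by
    rw [hx0def]; field_simp
  have two_le : ∀ p : ℝ, p ≤ 0 → (2:ℝ) ^ p ≤ 1 := fun p hp =>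
    Real.rpow_le_one_of_one_le_of_nonpos one_le_two hp
  have hEx0 : E x0 ≤ a x0 ^ 2 + b x0 ^ 2 := by
    simp only [hEdef, hx0m]
    have h1 : (2:ℝ) ^ (-(2*γ) : ℝ) ≤ 1 := two_le _ (by linarith)
    nlinarith [sq_nonneg (b x0), Real.rpow_pos_of_pos (by norm_num : (0:ℝ) < 2) (-(2*γ) : ℝ)]
  have hexpx0 : Real.exp (-(G x0)) ≤ Real.exp (1/(1-γ) + 1/(γ-1/2)) := by
    apply Real.exp_le_exp.mpr
    simp only [hGdef, hx0m]
    have h1 : (2:ℝ) ^ (γ-1 : ℝ) ≤ 1 := two_le _ (by linarith)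
    have h2 : (2:ℝ) ^ (1/2-γ : ℝ) ≤ 1 := two_le _ (by linarith)
    have h1' : 0 < (2:ℝ) ^ (γ-1 : ℝ) := Real.rpow_pos_of_pos (by norm_num) _
    have h2' : 0 < (2:ℝ) ^ (1/2-γ : ℝ) := Real.rpow_pos_of_pos (by norm_num) _
    have c1 : 0 < 1/(1-γ) := by positivity
    have c2 : 0 < 1/(γ-1/2) := by positivity
    nlinarith [mul_le_mul_of_nonneg_left h1 c1.le, mul_le_mul_of_nonneg_left h2 c2.le]
  have step2 : F x0 ≤ Real.exp (1/(1-γ) + 1/(γ-1/2)) * (a x0 ^ 2 + b x0 ^ 2) := by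
    have hS : 0 ≤ a x0 ^ 2 + b x0 ^ 2 := by positivity
    calc F x0 = E x0 * Real.exp (-(G x0)) := rfl
      _ ≤ (a x0 ^ 2 + b x0 ^ 2) * Real.exp (1/(1-γ) + 1/(γ-1/2)) := by
          exact mul_le_mul hEx0 hexpx0 (Real.exp_pos _).le hS
      _ = Real.exp (1/(1-γ) + 1/(γ-1/2)) * (a x0 ^ 2 + b x0 ^ 2) := by ring
  calc a t ^ 2 + (t/ξ) ^ (-(2*γ) : ℝ) * b t ^ 2 = E t := rfl
    _ ≤ F t := step1
    _ ≤ F x0 := hFt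
    _ ≤ Real.exp (1/(1-γ) + 1/(γ-1/2)) * (a x0 ^ 2 + b x0 ^ 2) := step2

end
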